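/- In a finite game graph, the limit values α(P) and β(P) are rational numbers for every position P. -/

import Mathlib

open Finset

/-- A finite game graph: each non-terminal position has nonempty finite sets of
White and Black options; terminal positions carry a value 0 (Black win) or 1 (White win). -/
structure GameGraph (P : Type) [Fintype P] [DecidableEq P] where
  terminal : P → Bool
  tval : P → ℝ
  tval01 : ∀ p, terminal p = true → tval p = 0 ∨ tval p = 1
  W : P → Finset P
  B : P → Finset P
  Wne : ∀ p, terminal p = false → (W p).Nonempty
  Bne : ∀ p, terminal p = false → (B p).Nonempty

variable {P : Type} [Fintype P] [DecidableEq P]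

/-- The thresholds `α_n`, with base value 0 at non-terminal positions. -/
noncomputable def GameGraph.alpha (G : GameGraph P) : ℕ → P → ℝ
  | 0, p => if G.terminal p then G.tval p else 0
  | n+1, p =>
    if h : G.terminal p = true then G.tval p
    else ((G.W p).sup' (G.Wne p (by simpa using h)) (G.alpha n)
        + (G.B p).inf' (G.Bne p (by simpa using h)) (G.alpha n)) / 2

/-- The thresholds `β_n`, with base value 1 at non-terminal positions. -/
noncomputable def GameGraph.beta (G : GameGraph P) : ℕ → P → ℝ
  | 0, p => if G.terminal p then G.tval p else 1
  | n+1, p =>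
    if h : G.terminal p = true then G.tval p
    else ((G.W p).sup' (G.Wne p (by simpa using h)) (G.beta n)
        + (G.B p).inf' (G.Bne p (by simpa using h)) (G.beta n)) / 2

noncomputable def GameGraph.alphaLim (G : GameGraph P) (p : P) : ℝ := ⨆ n, G.alpha n p

noncomputable def GameGraph.betaLim (G : GameGraph P) (p : P) : ℝ := ⨅ n, G.beta n p

/-- A Richman function: values in `[0,1]`, prescribed terminal values, and the
averaging equation at non-terminal positions. -/
def GameGraph.IsRichman (G : GameGraph P) (x : P → ℝ) : Prop :=
  (∀ p, 0 ≤ x p ∧ x p ≤ 1) ∧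
  (∀ p, G.terminal p = true → x p = G.tval p) ∧
  (∀ p, ∀ h : G.terminal p = false,
    x p = ((G.W p).sup' (G.Wne p h) x + (G.B p).inf' (G.Bne p h) x) / 2)

namespace GameGraph
variable (G : GameGraph P)

lemma alpha_succ_eq (n : ℕ) {p : P} (h : G.terminal p = false) :
    G.alpha (n+1) p = ((G.W p).sup' (G.Wne p h) (G.alpha n)
        + (G.B p).inf' (G.Bne p h) (G.alpha n)) / 2 := by
  conv_lhs => rw [GameGraph.alpha]
  rw [dif_neg (by simp [h])]

lemma alpha_zero_eq {p : P} (h : G.terminal p = false) : G.alpha 0 p = 0 := by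
  conv_lhs => rw [GameGraph.alpha]
  rw [if_neg (by simp [h])]

lemma alpha_terminal (n : ℕ) {p : P} (h : G.terminal p = true) :
    G.alpha n p = G.tval p := by
  cases n <;> (conv_lhs => rw [GameGraph.alpha]) <;> simp [h]

lemma tval_mem01 {p : P} (h : G.terminal p = true) : 0 ≤ G.tval p ∧ G.tval p ≤ 1 := by
  rcases G.tval01 p h with h' | h' <;> simp [h']

omit [Fintype P] [DecidableEq P] in
lemma inf'_mono {s : Finset P} (H : s.Nonempty) {f g : P → ℝ} (h : ∀ b ∈ s, f b ≤ g b) :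
    s.inf' H f ≤ s.inf' H g := by
  obtain ⟨b, hb, he⟩ := Finset.exists_mem_eq_inf' H g
  rw [he]
  exact le_trans (Finset.inf'_le _ hb) (h b hb)

lemma alpha_mem01 : ∀ n p, 0 ≤ G.alpha n p ∧ G.alpha n p ≤ 1 := by
  intro n
  induction n with
  | zero =>
    intro p
    by_cases h : G.terminal p = true
    · simpa [G.alpha_terminal 0 h] using G.tval_mem01 h
    · simp [G.alpha_zero_eq (by simpa using h)]
  | succ n ih =>
    intro p
    by_cases h : G.terminal p = true
    · simpa [G.alpha_terminal (n+1) h] using G.tval_mem01 h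
    · have h' : G.terminal p = false := by simpa using h
      obtain ⟨w, hw⟩ := G.Wne p h'
      obtain ⟨b, hb⟩ := G.Bne p h'
      rw [G.alpha_succ_eq n h']
      constructor
      · have h1 : (0:ℝ) ≤ (G.W p).sup' (G.Wne p h') (G.alpha n) :=
          le_trans (ih w).1 (Finset.le_sup' _ hw)
        have h2 : (0:ℝ) ≤ (G.B p).inf' (G.Bne p h') (G.alpha n) :=
          Finset.le_inf' _ _ fun b _ => (ih b).1
        linarith
      · have h1 : (G.W p).sup' (G.Wne p h') (G.alpha n) ≤ 1 :=
          Finset.sup'_le _ _ fun w _ => (ih w).2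
        have h2 : (G.B p).inf' (G.Bne p h') (G.alpha n) ≤ 1 :=
          le_trans (Finset.inf'_le _ hb) (ih b).2
        linarith

lemma alpha_succ_le : ∀ n p, G.alpha n p ≤ G.alpha (n+1) p := by
  intro n
  induction n with
  | zero =>
    intro p
    by_cases h : G.terminal p = true
    · rw [G.alpha_terminal 0 h, G.alpha_terminal 1 h]
    · have h' : G.terminal p = false := by simpa using h
      rw [G.alpha_zero_eq h', G.alpha_succ_eq 0 h']
      obtain ⟨w, hw⟩ := G.Wne p h'
      have h1 : (0:ℝ) ≤ (G.W p).sup' (G.Wne p h') (G.alpha 0) :=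
        le_trans (G.alpha_mem01 0 w).1 (Finset.le_sup' _ hw)
      have h2 : (0:ℝ) ≤ (G.B p).inf' (G.Bne p h') (G.alpha 0) :=
        Finset.le_inf' _ _ fun b _ => (G.alpha_mem01 0 b).1
      linarith
  | succ n ih =>
    intro p
    by_cases h : G.terminal p = true
    · rw [G.alpha_terminal (n+1) h, G.alpha_terminal (n+2) h]
    · have h' : G.terminal p = false := by simpa using h
      rw [G.alpha_succ_eq n h', G.alpha_succ_eq (n+1) h']
      have h1 : (G.W p).sup' (G.Wne p h') (G.alpha n) ≤ (G.W p).sup' (G.Wne p h') (G.alpha (n+1)) :=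
        Finset.sup'_mono_fun fun w _ => ih w
      have h2 : (G.B p).inf' (G.Bne p h') (G.alpha n) ≤ (G.B p).inf' (G.Bne p h') (G.alpha (n+1)) :=
        inf'_mono _ fun b _ => ih b
      linarith

lemma alpha_mono (p : P) : Monotone fun n => G.alpha n p :=
  monotone_nat_of_le_succ fun n => G.alpha_succ_le n p

lemma alpha_bdd (p : P) : BddAbove (Set.range fun n => G.alpha n p) :=
  ⟨1, by rintro _ ⟨n, rfl⟩; exact (G.alpha_mem01 n p).2⟩

lemma alpha_le_alphaLim (n : ℕ) (p : P) : G.alpha n p ≤ G.alphaLim p :=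
  le_ciSup (G.alpha_bdd p) n

lemma alphaLim_mem01 (p : P) : 0 ≤ G.alphaLim p ∧ G.alphaLim p ≤ 1 :=
  ⟨le_trans (G.alpha_mem01 0 p).1 (G.alpha_le_alphaLim 0 p),
   ciSup_le fun n => (G.alpha_mem01 n p).2⟩

end GameGraph

namespace GameGraph
variable (G : GameGraph P)

omit [Fintype P] [DecidableEq P] in
lemma iSup_add_of_monotone {s t : ℕ → ℝ} (hs : Monotone s) (ht : Monotone t)
    (hbs : BddAbove (Set.range s)) (hbt : BddAbove (Set.range t)) :
    ⨆ n, (s n + t n) = (⨆ n, s n) + (⨆ n, t n) := by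
  obtain ⟨Bs, hBs⟩ := hbs
  obtain ⟨Bt, hBt⟩ := hbt
  have hBs' : ∀ n, s n ≤ Bs := fun n => hBs ⟨n, rfl⟩
  have hBt' : ∀ n, t n ≤ Bt := fun n => hBt ⟨n, rfl⟩
  have hb : BddAbove (Set.range fun n => s n + t n) :=
    ⟨Bs + Bt, by rintro _ ⟨n, rfl⟩; exact add_le_add (hBs' n) (hBt' n)⟩
  refine le_antisymm (ciSup_le fun n => add_le_add (le_ciSup ⟨Bs, hBs⟩ n) (le_ciSup ⟨Bt, hBt⟩ n)) ?_
  have key : ∀ n m, s n + t m ≤ ⨆ k, (s k + t k) := fun n m =>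
    le_trans (add_le_add (hs (le_max_left n m)) (ht (le_max_right n m))) (le_ciSup hb (max n m))
  have h1 : ∀ m, (⨆ n, s n) + t m ≤ ⨆ k, (s k + t k) := by
    intro m
    have : (⨆ n, s n) ≤ (⨆ k, (s k + t k)) - t m := ciSup_le fun n => by linarith [key n m]
    linarith
  have h2 : (⨆ m, t m) ≤ (⨆ k, (s k + t k)) - ⨆ n, s n := ciSup_le fun m => by linarith [h1 m]
  linarith

omit [Fintype P] [DecidableEq P] in
lemma iSup_div_two {u : ℕ → ℝ} (hbu : BddAbove (Set.range u)) :
    ⨆ n, u n / 2 = (⨆ n, u n) / 2 := by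
  obtain ⟨B, hB⟩ := hbu
  have hb2 : BddAbove (Set.range fun n => u n / 2) :=
    ⟨B / 2, by rintro _ ⟨n, rfl⟩; have := hB ⟨n, rfl⟩; simpa using by linarith⟩
  refine le_antisymm (ciSup_le fun n => by linarith [le_ciSup ⟨B, hB⟩ n]) ?_
  have : (⨆ n, u n) ≤ 2 * ⨆ n, u n / 2 := ciSup_le fun n => by linarith [le_ciSup hb2 n]
  linarith

lemma iSup_shift (p : P) : G.alphaLim p = ⨆ n, G.alpha (n+1) p := by
  refine le_antisymm (ciSup_le fun n => ?_) (ciSup_le fun n => G.alpha_le_alphaLim (n+1) p)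
  exact le_trans (G.alpha_succ_le n p)
    (le_ciSup (⟨1, by rintro _ ⟨m, rfl⟩; exact (G.alpha_mem01 (m+1) p).2⟩ :
      BddAbove (Set.range fun n => G.alpha (n+1) p)) n)

lemma sup'_exchange {p : P} (h : G.terminal p = false) :
    ⨆ n, (G.W p).sup' (G.Wne p h) (G.alpha n) = (G.W p).sup' (G.Wne p h) G.alphaLim := by
  have hb : BddAbove (Set.range fun n => (G.W p).sup' (G.Wne p h) (G.alpha n)) :=
    ⟨1, by rintro _ ⟨n, rfl⟩; exact Finset.sup'_le _ _ fun w _ => (G.alpha_mem01 n w).2⟩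
  refine le_antisymm
    (ciSup_le fun n => Finset.sup'_mono_fun fun w _ => G.alpha_le_alphaLim n w)
    (Finset.sup'_le _ _ fun w hw => ciSup_le fun n =>
      le_trans (Finset.le_sup' _ hw) (le_ciSup hb n))

lemma inf'_exchange {p : P} (h : G.terminal p = false) :
    ⨆ n, (G.B p).inf' (G.Bne p h) (G.alpha n) = (G.B p).inf' (G.Bne p h) G.alphaLim := by
  have hb : BddAbove (Set.range fun n => (G.B p).inf' (G.Bne p h) (G.alpha n)) :=
    ⟨1, by rintro _ ⟨n, rfl⟩; obtain ⟨b, hbm⟩ := G.Bne p h; exact le_trans (Finset.inf'_le _ hbm) (G.alpha_mem01 n b).2⟩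
  refine le_antisymm
    (ciSup_le fun n => inf'_mono _ fun b _ => G.alpha_le_alphaLim n b) ?_
  -- pigeonhole
  have hsel : ∀ n : ℕ, ∃ b, b ∈ G.B p ∧ (G.B p).inf' (G.Bne p h) (G.alpha n) = G.alpha n b :=
    fun n => Finset.exists_mem_eq_inf' (G.Bne p h) (G.alpha n)
  choose bs hbs1 hbs2 using hsel
  obtain ⟨b, hbfib⟩ := Finite.exists_infinite_fiber bs
  have hbinf : (bs ⁻¹' {b}).Infinite := Set.infinite_coe_iff.mp hbfib
  obtain ⟨n0, hn0⟩ := hbinf.nonempty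
  have hbmem : b ∈ G.B p := by
    have := hbs1 n0
    rwa [show bs n0 = b from hn0] at this
  have hkey : ∀ n, G.alpha n b ≤ ⨆ m, (G.B p).inf' (G.Bne p h) (G.alpha m) := by
    intro n
    obtain ⟨m, hm, hnm⟩ := hbinf.exists_gt n
    calc G.alpha n b ≤ G.alpha m b := G.alpha_mono b (le_of_lt hnm)
    _ = (G.B p).inf' (G.Bne p h) (G.alpha m) := by
        rw [← show bs m = b from hm]; exact (hbs2 m).symm
    _ ≤ _ := le_ciSup hb m
  calc (G.B p).inf' (G.Bne p h) G.alphaLim ≤ G.alphaLim b := Finset.inf'_le _ hbmem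
  _ ≤ _ := ciSup_le hkey

lemma isRichman_alphaLim : G.IsRichman G.alphaLim := by
  refine ⟨G.alphaLim_mem01, fun p hp => ?_, fun p h => ?_⟩
  · rw [alphaLim]
    have : ∀ n, G.alpha n p = G.tval p := fun n => G.alpha_terminal n hp
    simp only [this]
    exact ciSup_const
  · have hs : Monotone fun n => (G.W p).sup' (G.Wne p h) (G.alpha n) / 2 := by
      intro n m hnm
      have := Finset.sup'_mono_fun (s := G.W p) (hs := G.Wne p h)
        (fun w _ => G.alpha_mono w hnm)
      linarith
    have ht : Monotone fun n => (G.B p).inf' (G.Bne p h) (G.alpha n) / 2 := by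
      intro n m hnm
      have := inf'_mono (G.Bne p h) (fun b _ => G.alpha_mono b hnm)
      linarith
    have hbs : BddAbove (Set.range fun n => (G.W p).sup' (G.Wne p h) (G.alpha n)) :=
      ⟨1, by rintro _ ⟨n, rfl⟩; exact Finset.sup'_le _ _ fun w _ => (G.alpha_mem01 n w).2⟩
    have hbt : BddAbove (Set.range fun n => (G.B p).inf' (G.Bne p h) (G.alpha n)) :=
      ⟨1, by rintro _ ⟨n, rfl⟩; obtain ⟨b, hbm⟩ := G.Bne p h; exact le_trans (Finset.inf'_le _ hbm) (G.alpha_mem01 n b).2⟩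
    have hbs2 : BddAbove (Set.range fun n => (G.W p).sup' (G.Wne p h) (G.alpha n) / 2) := by
      obtain ⟨B, hB⟩ := hbs
      exact ⟨B / 2, by rintro _ ⟨n, rfl⟩; have := hB ⟨n, rfl⟩; simp only; linarith⟩
    have hbt2 : BddAbove (Set.range fun n => (G.B p).inf' (G.Bne p h) (G.alpha n) / 2) := by
      obtain ⟨B, hB⟩ := hbt
      exact ⟨B / 2, by rintro _ ⟨n, rfl⟩; have := hB ⟨n, rfl⟩; simp only; linarith⟩
    calc G.alphaLim p = ⨆ n, G.alpha (n+1) p := G.iSup_shift p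
    _ = ⨆ n, ((G.W p).sup' (G.Wne p h) (G.alpha n) / 2
          + (G.B p).inf' (G.Bne p h) (G.alpha n) / 2) := by
        refine congrArg iSup (funext fun n => ?_)
        rw [G.alpha_succ_eq n h]; ring
    _ = (⨆ n, (G.W p).sup' (G.Wne p h) (G.alpha n) / 2)
          + ⨆ n, (G.B p).inf' (G.Bne p h) (G.alpha n) / 2 :=
        iSup_add_of_monotone hs ht hbs2 hbt2
    _ = (⨆ n, (G.W p).sup' (G.Wne p h) (G.alpha n)) / 2
          + (⨆ n, (G.B p).inf' (G.Bne p h) (G.alpha n)) / 2 := by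
        rw [iSup_div_two hbs, iSup_div_two hbt]
    _ = ((G.W p).sup' (G.Wne p h) G.alphaLim + (G.B p).inf' (G.Bne p h) G.alphaLim) / 2 := by
        rw [G.sup'_exchange h, G.inf'_exchange h]; ring

lemma alphaLim_le_of_isRichman {x : P → ℝ} (hx : G.IsRichman x) (p : P) :
    G.alphaLim p ≤ x p := by
  have key : ∀ n p, G.alpha n p ≤ x p := by
    intro n
    induction n with
    | zero =>
      intro p
      by_cases h : G.terminal p = true
      · rw [G.alpha_terminal 0 h, ← hx.2.1 p h]
      · rw [G.alpha_zero_eq (by simpa using h)]; exact (hx.1 p).1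
    | succ n ih =>
      intro p
      by_cases h : G.terminal p = true
      · rw [G.alpha_terminal (n+1) h, ← hx.2.1 p h]
      · have h' : G.terminal p = false := by simpa using h
        rw [G.alpha_succ_eq n h', hx.2.2 p h']
        have h1 : (G.W p).sup' (G.Wne p h') (G.alpha n) ≤ (G.W p).sup' (G.Wne p h') x :=
          Finset.sup'_mono_fun fun w _ => ih w
        have h2 : (G.B p).inf' (G.Bne p h') (G.alpha n) ≤ (G.B p).inf' (G.Bne p h') x :=
          inf'_mono _ fun b _ => ih b
        linarith
  exact ciSup_le fun n => key n p

end GameGraph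

section RatLin

open Finset

theorem rat_of_unique_solution {Q I : Type} [Fintype Q] [Fintype I] [DecidableEq Q]
    (a : I → Q → ℚ) (c : I → ℚ) (x : Q → ℝ)
    (hsol : ∀ i, ∑ p, (a i p : ℝ) * x p = (c i : ℝ))
    (huniq : ∀ y : Q → ℝ, (∀ i, ∑ p, (a i p : ℝ) * y p = (c i : ℝ)) → y = x) :
    ∀ p, ∃ q : ℚ, (q : ℝ) = x p := by
  classical
  let L : (Q → ℚ) →ₗ[ℚ] (I → ℚ) :=
    { toFun := fun v i => ∑ p, a i p * v p
      map_add' := by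
        intro v w; funext i; simp [mul_add, Finset.sum_add_distrib]
      map_smul' := by
        intro r v; funext i; simp [Finset.mul_sum]; ring_nf; simp [mul_assoc, mul_comm, mul_left_comm] }
  by_cases hc : c ∈ LinearMap.range L
  · obtain ⟨q, hq⟩ := hc
    have hxq : (fun p => (q p : ℝ)) = x := by
      apply huniq
      intro i
      have h1 : (∑ p, a i p * q p) = c i := congrFun hq i
      have : ((∑ p, a i p * q p : ℚ) : ℝ) = (c i : ℝ) := by exact_mod_cast h1
      rw [← this]
      push_cast
      rfl
    exact fun p => ⟨q p, congrFun hxq p⟩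
  · exfalso
    have h1 : Submodule.Quotient.mk (p := LinearMap.range L) c ≠ 0 := by
      simpa [Submodule.Quotient.mk_eq_zero] using hc
    obtain ⟨φ, hφ⟩ : ∃ φ : Module.Dual ℚ ((I → ℚ) ⧸ LinearMap.range L),
        φ (Submodule.Quotient.mk c) ≠ 0 := by
      by_contra hcon
      push_neg at hcon
      exact h1 ((Module.forall_dual_apply_eq_zero_iff ℚ _).1 hcon)
    set f : Module.Dual ℚ (I → ℚ) := φ.comp (LinearMap.range L).mkQ with hf
    have hf0 : ∀ v, f (L v) = 0 := by
      intro v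
      have : (LinearMap.range L).mkQ (L v) = 0 := by
        rw [Submodule.mkQ_apply, Submodule.Quotient.mk_eq_zero]
        exact ⟨v, rfl⟩
      simp [hf, this]
    have hfc : f c ≠ 0 := hφ
    set u : I → ℚ := fun i => f (fun j => if i = j then 1 else 0) with hu
    -- columns are annihilated by u
    have hup : ∀ p, ∑ i, u i * a i p = 0 := by
      intro p
      have h2 := hf0 (fun p' => if p = p' then 1 else 0)
      rw [LinearMap.pi_apply_eq_sum_univ f] at h2
      have h3 : ∀ i, (L fun p' => if p = p' then 1 else 0) i = a i p := by
        intro i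
        show (∑ p', a i p' * if p = p' then 1 else 0) = a i p
        simp [mul_ite, Finset.sum_ite_eq]
      calc ∑ i, u i * a i p = ∑ i, (L fun p' => if p = p' then 1 else 0) i • f (fun j => if i = j then 1 else 0) := by
            refine Finset.sum_congr rfl fun i _ => ?_
            rw [h3 i, smul_eq_mul, mul_comm]
      _ = 0 := h2
    -- but u · c ≠ 0
    have hucne : (∑ i, u i * c i) ≠ 0 := by
      have := LinearMap.pi_apply_eq_sum_univ f c
      intro hz
      apply hfc
      rw [this]
      have h4 : (∑ i, c i • f fun j => if i = j then 1 else 0) = ∑ i, u i * c i := by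
        refine Finset.sum_congr rfl fun i _ => ?_
        rw [smul_eq_mul, mul_comm]
      rw [h4, hz]
    -- contradiction via the real solution
    have hzero : ((∑ i, u i * c i : ℚ) : ℝ) = 0 := by
      push_cast
      calc ∑ i, (u i : ℝ) * (c i : ℝ)
          = ∑ i, (u i : ℝ) * ∑ p, (a i p : ℝ) * x p := by
            refine Finset.sum_congr rfl fun i _ => ?_; rw [hsol i]
      _ = ∑ i, ∑ p, (u i : ℝ) * ((a i p : ℝ) * x p) := by
            refine Finset.sum_congr rfl fun i _ => ?_; rw [Finset.mul_sum]
      _ = ∑ p, ∑ i, (u i : ℝ) * ((a i p : ℝ) * x p) := Finset.sum_comm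
      _ = ∑ p, (∑ i, (u i : ℝ) * (a i p : ℝ)) * x p := by
            refine Finset.sum_congr rfl fun p _ => ?_
            rw [Finset.sum_mul]
            refine Finset.sum_congr rfl fun i _ => ?_; ring
      _ = 0 := by
            refine Finset.sum_eq_zero fun p _ => ?_
            have : (∑ i, (u i : ℝ) * (a i p : ℝ)) = ((∑ i, u i * a i p : ℚ) : ℝ) := by push_cast; rfl
            rw [this, hup p]
            simp
    exact hucne (by exact_mod_cast hzero)

end RatLin

section Constraints

open Finset

variable {P : Type} [Fintype P] [DecidableEq P]

noncomputable def sing (q : P) : P → ℚ := fun p => if p = q then 1 else 0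

lemma dot_sing (q : P) (x : P → ℝ) : ∑ p, ((sing q p : ℚ) : ℝ) * x p = x q := by
  have : ∀ p, ((sing q p : ℚ) : ℝ) * x p = if p = q then x p else 0 := by
    intro p
    by_cases h : p = q <;> simp [sing, h]
  rw [Finset.sum_congr rfl fun p _ => this p]
  simp [Finset.sum_ite_eq']

lemma dot_zero (x : P → ℝ) : ∑ p, (((0 : P → ℚ) p : ℚ) : ℝ) * x p = 0 := by simp

lemma dot_two (u v w : P) (x : P → ℝ) :
    ∑ p', ((2 * sing u p' - sing v p' - sing w p' : ℚ) : ℝ) * x p' = 2 * x u - x v - x w := by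
  have : ∀ p', ((2 * sing u p' - sing v p' - sing w p' : ℚ) : ℝ) * x p'
      = 2 * (((sing u p' : ℚ) : ℝ) * x p') - ((sing v p' : ℚ) : ℝ) * x p'
        - ((sing w p' : ℚ) : ℝ) * x p' := by
    intro p'; push_cast; ring
  rw [Finset.sum_congr rfl fun p' _ => this p', Finset.sum_sub_distrib, Finset.sum_sub_distrib,
    ← Finset.mul_sum, dot_sing, dot_sing, dot_sing]

lemma dot_sub (v w : P) (x : P → ℝ) :
    ∑ p', ((sing v p' - sing w p' : ℚ) : ℝ) * x p' = x v - x w := by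
  have : ∀ p', ((sing v p' - sing w p' : ℚ) : ℝ) * x p'
      = ((sing v p' : ℚ) : ℝ) * x p' - ((sing w p' : ℚ) : ℝ) * x p' := by
    intro p'; push_cast; ring
  rw [Finset.sum_congr rfl fun p' _ => this p', Finset.sum_sub_distrib, dot_sing, dot_sing]

/-- Constraint index type: six families. -/
abbrev CIdx (P : Type) := P ⊕ P ⊕ P ⊕ P ⊕ (P × P) ⊕ (P × P)

open Classical in
/-- Coefficient vectors of the tight constraints at `al`. -/
noncomputable def consA (G : GameGraph P) (al : P → ℝ) (wsel bsel : P → P) : CIdx P → P → ℚ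
  | Sum.inl p => if G.terminal p = true then sing p else 0
  | Sum.inr (Sum.inl p) =>
      if G.terminal p = false then
        (fun p' => 2 * sing p p' - sing (wsel p) p' - sing (bsel p) p') else 0
  | Sum.inr (Sum.inr (Sum.inl p)) => if al p = 0 then sing p else 0
  | Sum.inr (Sum.inr (Sum.inr (Sum.inl p))) => if al p = 1 then sing p else 0
  | Sum.inr (Sum.inr (Sum.inr (Sum.inr (Sum.inl (p, w))))) =>
      if G.terminal p = false ∧ w ∈ G.W p ∧ al (wsel p) = al w then
        (fun p' => sing (wsel p) p' - sing w p') else 0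
  | Sum.inr (Sum.inr (Sum.inr (Sum.inr (Sum.inr (p, b))))) =>
      if G.terminal p = false ∧ b ∈ G.B p ∧ al (bsel p) = al b then
        (fun p' => sing (bsel p) p' - sing b p') else 0

open Classical in
/-- Right-hand sides of the tight constraints at `al`. -/
noncomputable def consC (G : GameGraph P) (al : P → ℝ) : CIdx P → ℚ
  | Sum.inl p => if G.terminal p = true then (if G.tval p = 0 then 0 else 1) else 0
  | Sum.inr (Sum.inl _) => 0
  | Sum.inr (Sum.inr (Sum.inl _)) => 0
  | Sum.inr (Sum.inr (Sum.inr (Sum.inl p))) => if al p = 1 then 1 else 0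
  | Sum.inr (Sum.inr (Sum.inr (Sum.inr (Sum.inl _)))) => 0
  | Sum.inr (Sum.inr (Sum.inr (Sum.inr (Sum.inr _)))) => 0

end Constraints

open Finset Filter in
theorem GameGraph.exists_rat_alphaLim (G : GameGraph P) :
    ∀ p, ∃ q : ℚ, (q : ℝ) = G.alphaLim p := by
  classical
  set α := G.alphaLim with hαdef
  obtain ⟨wsel, hwsel⟩ : ∃ ws : P → P, ∀ p (h : G.terminal p = false),
      ws p ∈ G.W p ∧ (G.W p).sup' (G.Wne p h) α = α (ws p) := by
    choose f hf1 hf2 using fun p (h : G.terminal p = false) =>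
      Finset.exists_mem_eq_sup' (G.Wne p h) α
    refine ⟨fun p => if h : G.terminal p = false then f p h else p, fun p h => ?_⟩
    simp only [dif_pos h]
    exact ⟨hf1 p h, hf2 p h⟩
  obtain ⟨bsel, hbsel⟩ : ∃ bs : P → P, ∀ p (h : G.terminal p = false),
      bs p ∈ G.B p ∧ (G.B p).inf' (G.Bne p h) α = α (bs p) := by
    choose f hf1 hf2 using fun p (h : G.terminal p = false) =>
      Finset.exists_mem_eq_inf' (G.Bne p h) α
    refine ⟨fun p => if h : G.terminal p = false then f p h else p, fun p h => ?_⟩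
    simp only [dif_pos h]
    exact ⟨hf1 p h, hf2 p h⟩
  have hR : G.IsRichman α := G.isRichman_alphaLim
  have havg : ∀ p (h : G.terminal p = false), α p = (α (wsel p) + α (bsel p)) / 2 := by
    intro p h
    rw [hR.2.2 p h, (hwsel p h).2, (hbsel p h).2]
  -- the rational system
  apply rat_of_unique_solution (consA G α wsel bsel) (consC G α) α
  -- α is a solution
  · intro i
    rcases i with p | p | p | p | ⟨p, w⟩ | ⟨p, b⟩
    · by_cases ht : G.terminal p = true
      · simp only [consA, consC, if_pos ht]
        rw [dot_sing]
        rw [hR.2.1 p ht]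
        rcases G.tval01 p ht with h0 | h1
        · rw [h0, if_pos rfl]; norm_num
        · rw [h1, if_neg (by norm_num)]; norm_num
      · simp only [consA, consC, if_neg ht]
        rw [dot_zero]; norm_num
    · by_cases ht : G.terminal p = false
      · simp only [consA, consC, if_pos ht]
        rw [dot_two]
        have := havg p ht
        push_cast
        linarith
      · simp only [consA, consC, if_neg ht]
        rw [dot_zero]; norm_num
    · by_cases hz : α p = 0
      · simp only [consA, consC, if_pos hz]
        rw [dot_sing, hz]; norm_num
      · simp only [consA, consC, if_neg hz]
        rw [dot_zero]; norm_num
    · by_cases ho : α p = 1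
      · simp only [consA, consC, if_pos ho]
        rw [dot_sing, ho]; norm_num
      · simp only [consA, consC, if_neg ho]
        rw [dot_zero]; norm_num
    · by_cases hc : G.terminal p = false ∧ w ∈ G.W p ∧ α (wsel p) = α w
      · simp only [consA, consC, if_pos hc]
        rw [dot_sub, hc.2.2]; norm_num
      · simp only [consA, consC, if_neg hc]
        rw [dot_zero]; norm_num
    · by_cases hc : G.terminal p = false ∧ b ∈ G.B p ∧ α (bsel p) = α b
      · simp only [consA, consC, if_pos hc]
        rw [dot_sub, hc.2.2]; norm_num
      · simp only [consA, consC, if_neg hc]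
        rw [dot_zero]; norm_num
  -- uniqueness
  · intro y hy
    have e1 : ∀ p, G.terminal p = true → y p = G.tval p := by
      intro p ht
      have h := hy (Sum.inl p)
      simp only [consA, consC, if_pos ht] at h
      rw [dot_sing] at h
      rcases G.tval01 p ht with h0 | h1
      · rw [h0]; rw [h0, if_pos rfl] at h; exact_mod_cast h
      · rw [h1]; rw [h1, if_neg (by norm_num)] at h; exact_mod_cast h
    have e2 : ∀ p, G.terminal p = false → 2 * y p - y (wsel p) - y (bsel p) = 0 := by
      intro p ht
      have h := hy (Sum.inr (Sum.inl p))
      simp only [consA, consC, if_pos ht] at h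
      rw [dot_two] at h
      exact_mod_cast h
    have e3 : ∀ p, α p = 0 → y p = 0 := by
      intro p hz
      have h := hy (Sum.inr (Sum.inr (Sum.inl p)))
      simp only [consA, consC, if_pos hz] at h
      rw [dot_sing] at h
      exact_mod_cast h
    have e4 : ∀ p, α p = 1 → y p = 1 := by
      intro p ho
      have h := hy (Sum.inr (Sum.inr (Sum.inr (Sum.inl p))))
      simp only [consA, consC, if_pos ho] at h
      rw [dot_sing] at h
      exact_mod_cast h
    have e5 : ∀ p w, G.terminal p = false → w ∈ G.W p → α (wsel p) = α w →
        y (wsel p) = y w := by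
      intro p w ht hw heq
      have h := hy (Sum.inr (Sum.inr (Sum.inr (Sum.inr (Sum.inl (p, w))))))
      simp only [consA, consC, if_pos (⟨ht, hw, heq⟩ :
        G.terminal p = false ∧ w ∈ G.W p ∧ α (wsel p) = α w)] at h
      rw [dot_sub] at h
      have : y (wsel p) - y w = 0 := by exact_mod_cast h
      linarith
    have e6 : ∀ p b, G.terminal p = false → b ∈ G.B p → α (bsel p) = α b →
        y (bsel p) = y b := by
      intro p b ht hb heq
      have h := hy (Sum.inr (Sum.inr (Sum.inr (Sum.inr (Sum.inr (p, b))))))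
      simp only [consA, consC, if_pos (⟨ht, hb, heq⟩ :
        G.terminal p = false ∧ b ∈ G.B p ∧ α (bsel p) = α b)] at h
      rw [dot_sub] at h
      have : y (bsel p) - y b = 0 := by exact_mod_cast h
      linarith
    set d : P → ℝ := fun p => y p - α p with hd
    have EV : ∀ᶠ ε : ℝ in nhds 0, ∀ p,
        (0 ≤ α p + ε * d p ∧ α p + ε * d p ≤ 1) ∧
        (∀ w, G.terminal p = false → w ∈ G.W p →
          α w + ε * d w ≤ α (wsel p) + ε * d (wsel p)) ∧
        (∀ b, G.terminal p = false → b ∈ G.B p →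
          α (bsel p) + ε * d (bsel p) ≤ α b + ε * d b) := by
      rw [Filter.eventually_all]
      intro p
      have hcont : ∀ z : P, Filter.Tendsto (fun ε : ℝ => α z + ε * d z)
          (nhds 0) (nhds (α z)) := by
        intro z
        have h1 : Continuous fun ε : ℝ => α z + ε * d z := by continuity
        have h2 := h1.tendsto 0
        simpa using h2
      refine Filter.Eventually.and ?_ (Filter.Eventually.and ?_ ?_)
      · by_cases hz : α p = 0
        · have hdp : d p = 0 := by simp [hd, e3 p hz, hz]
          filter_upwards with ε
          simp [hz, hdp]
        · by_cases ho : α p = 1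
          · have hdp : d p = 0 := by simp [hd, e4 p ho, ho]
            filter_upwards with ε
            simp [ho, hdp]
          · have h0 : 0 < α p := lt_of_le_of_ne (G.alphaLim_mem01 p).1 (Ne.symm hz)
            have h1 : α p < 1 := lt_of_le_of_ne (G.alphaLim_mem01 p).2 ho
            filter_upwards [(hcont p).eventually_const_lt h0,
              (hcont p).eventually_lt_const h1] with ε hε1 hε2
            exact ⟨le_of_lt hε1, le_of_lt hε2⟩
      · rw [Filter.eventually_all]
        intro w
        by_cases hc : G.terminal p = false ∧ w ∈ G.W p
        · by_cases heq : α (wsel p) = α w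
          · have hyeq : y (wsel p) = y w := e5 p w hc.1 hc.2 heq
            have hdd : d w = d (wsel p) := by simp [hd, hyeq, heq]
            filter_upwards with ε _ _
            exact le_of_eq (by rw [← heq, hdd])
          · have hlt : α w < α (wsel p) := by
              have hle : α w ≤ α (wsel p) := by
                rw [← (hwsel p hc.1).2]; exact Finset.le_sup' _ hc.2
              exact lt_of_le_of_ne hle (fun h => heq h.symm)
            filter_upwards [Filter.Tendsto.eventually_lt (hcont w) (hcont (wsel p)) hlt]
              with ε hε _ _
            exact le_of_lt hε
        · filter_upwards with ε hterm hmem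
          exact absurd ⟨hterm, hmem⟩ hc
      · rw [Filter.eventually_all]
        intro b
        by_cases hc : G.terminal p = false ∧ b ∈ G.B p
        · by_cases heq : α (bsel p) = α b
          · have hyeq : y (bsel p) = y b := e6 p b hc.1 hc.2 heq
            have hdd : d (bsel p) = d b := by simp [hd, hyeq, heq]
            filter_upwards with ε _ _
            exact le_of_eq (by rw [← heq, hdd])
          · have hlt : α (bsel p) < α b := by
              have hle : α (bsel p) ≤ α b := by
                rw [← (hbsel p hc.1).2]; exact Finset.inf'_le _ hc.2
              exact lt_of_le_of_ne hle heq
            filter_upwards [Filter.Tendsto.eventually_lt (hcont (bsel p)) (hcont b) hlt]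
              with ε hε _ _
            exact le_of_lt hε
        · filter_upwards with ε hterm hmem
          exact absurd ⟨hterm, hmem⟩ hc
    rw [Metric.eventually_nhds_iff] at EV
    obtain ⟨δ, hδpos, hEV⟩ := EV
    set ε : ℝ := δ / 2 with hεdef
    have hεpos : 0 < ε := by positivity
    have C1 := hEV (show dist ε 0 < δ by
      rw [Real.dist_eq, sub_zero, abs_of_pos hεpos]; rw [hεdef]; linarith)
    have C2 := hEV (show dist (-ε) 0 < δ by
      rw [Real.dist_eq, sub_zero, abs_neg, abs_of_pos hεpos]; rw [hεdef]; linarith)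
    have hRich : ∀ e : ℝ, (∀ p,
        (0 ≤ α p + e * d p ∧ α p + e * d p ≤ 1) ∧
        (∀ w, G.terminal p = false → w ∈ G.W p →
          α w + e * d w ≤ α (wsel p) + e * d (wsel p)) ∧
        (∀ b, G.terminal p = false → b ∈ G.B p →
          α (bsel p) + e * d (bsel p) ≤ α b + e * d b)) →
        G.IsRichman (fun p => α p + e * d p) := by
      intro e C
      refine ⟨fun p => (C p).1, fun p ht => ?_, fun p h => ?_⟩
      · have hdp : d p = 0 := by simp [hd, e1 p ht, hR.2.1 p ht]
        simp only [hdp, mul_zero, add_zero]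
        exact hR.2.1 p ht
      · have hsup : (G.W p).sup' (G.Wne p h) (fun p' => α p' + e * d p')
            = α (wsel p) + e * d (wsel p) :=
          le_antisymm (Finset.sup'_le _ _ fun w hw => (C p).2.1 w h hw)
            (Finset.le_sup' (fun p' => α p' + e * d p') (hwsel p h).1)
        have hinf : (G.B p).inf' (G.Bne p h) (fun p' => α p' + e * d p')
            = α (bsel p) + e * d (bsel p) :=
          le_antisymm (Finset.inf'_le (fun p' => α p' + e * d p') (hbsel p h).1)
            (Finset.le_inf' _ _ fun b hb => (C p).2.2 b h hb)
        simp only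
        rw [hsup, hinf]
        have hA := havg p h
        have hY := e2 p h
        have hdp : d p = (d (wsel p) + d (bsel p)) / 2 := by
          simp only [hd]
          linarith
        rw [hdp, hA]
        ring
    have hR1 := hRich ε C1
    have hR2 := hRich (-ε) C2
    funext p
    have hle1 : α p ≤ α p + ε * d p := by exact G.alphaLim_le_of_isRichman hR1 p
    have hle2 : α p ≤ α p + (-ε) * d p := by exact G.alphaLim_le_of_isRichman hR2 p
    have h5 : ε * d p = 0 := le_antisymm (by linarith) (by linarith)
    have h6 : d p = 0 := (mul_eq_zero.mp h5).resolve_left (ne_of_gt hεpos)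
    have : y p - α p = 0 := by simpa [hd] using h6
    linarith

namespace GameGraph

open Finset

variable (G : GameGraph P)

lemma beta_succ_eq (n : ℕ) {p : P} (h : G.terminal p = false) :
    G.beta (n+1) p = ((G.W p).sup' (G.Wne p h) (G.beta n)
        + (G.B p).inf' (G.Bne p h) (G.beta n)) / 2 := by
  conv_lhs => rw [GameGraph.beta]
  rw [dif_neg (by simp [h])]

lemma beta_zero_eq {p : P} (h : G.terminal p = false) : G.beta 0 p = 1 := by
  conv_lhs => rw [GameGraph.beta]
  rw [if_neg (by simp [h])]

lemma beta_terminal (n : ℕ) {p : P} (h : G.terminal p = true) :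
    G.beta n p = G.tval p := by
  cases n <;> (conv_lhs => rw [GameGraph.beta]) <;> simp [h]

/-- The dual game: swap the roles of the players and the terminal values. -/
noncomputable def dual : GameGraph P where
  terminal := G.terminal
  tval := fun p => 1 - G.tval p
  tval01 := fun p h => by rcases G.tval01 p h with h' | h' <;> simp [h']
  W := G.B
  B := G.W
  Wne := G.Bne
  Bne := G.Wne

omit [Fintype P] [DecidableEq P] in
lemma sup'_congr_fun {s : Finset P} (H : s.Nonempty) {f g : P → ℝ}
    (h : ∀ b ∈ s, f b = g b) : s.sup' H f = s.sup' H g := by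
  refine le_antisymm (Finset.sup'_le _ _ fun b hb => ?_) (Finset.sup'_le _ _ fun b hb => ?_)
  · rw [h b hb]; exact Finset.le_sup' g hb
  · rw [← h b hb]; exact Finset.le_sup' f hb

omit [Fintype P] [DecidableEq P] in
lemma inf'_congr_fun {s : Finset P} (H : s.Nonempty) {f g : P → ℝ}
    (h : ∀ b ∈ s, f b = g b) : s.inf' H f = s.inf' H g := by
  refine le_antisymm (Finset.le_inf' _ _ fun b hb => ?_) (Finset.le_inf' _ _ fun b hb => ?_)
  · rw [← h b hb]; exact Finset.inf'_le f hb
  · rw [h b hb]; exact Finset.inf'_le g hb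

omit [Fintype P] [DecidableEq P] in
lemma sup'_one_sub {s : Finset P} (H : s.Nonempty) (f : P → ℝ) :
    s.sup' H (fun x => 1 - f x) = 1 - s.inf' H f := by
  refine le_antisymm (Finset.sup'_le _ _ fun b hb => ?_) ?_
  · have := Finset.inf'_le f hb; linarith
  · obtain ⟨b, hb, he⟩ := Finset.exists_mem_eq_inf' H f
    rw [he]
    exact Finset.le_sup' (fun x => 1 - f x) hb

omit [Fintype P] [DecidableEq P] in
lemma inf'_one_sub {s : Finset P} (H : s.Nonempty) (f : P → ℝ) :
    s.inf' H (fun x => 1 - f x) = 1 - s.sup' H f := by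
  refine le_antisymm ?_ (Finset.le_inf' _ _ fun b hb => ?_)
  · obtain ⟨b, hb, he⟩ := Finset.exists_mem_eq_sup' H f
    rw [he]
    exact Finset.inf'_le (fun x => 1 - f x) hb
  · have := Finset.le_sup' f hb; linarith

lemma beta_dual : ∀ n p, G.beta n p = 1 - G.dual.alpha n p := by
  intro n
  induction n with
  | zero =>
    intro p
    by_cases ht : G.terminal p = true
    · rw [G.beta_terminal 0 ht, G.dual.alpha_terminal 0 (show G.dual.terminal p = true from ht)]
      show G.tval p = 1 - (1 - G.tval p)
      ring
    · have h' : G.terminal p = false := by simpa using ht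
      rw [G.beta_zero_eq h', G.dual.alpha_zero_eq (show G.dual.terminal p = false from h')]
      norm_num
  | succ n ih =>
    intro p
    by_cases ht : G.terminal p = true
    · rw [G.beta_terminal (n+1) ht,
        G.dual.alpha_terminal (n+1) (show G.dual.terminal p = true from ht)]
      show G.tval p = 1 - (1 - G.tval p)
      ring
    · have h' : G.terminal p = false := by simpa using ht
      rw [G.beta_succ_eq n h', G.dual.alpha_succ_eq n (show G.dual.terminal p = false from h')]
      have hW : (G.dual.W p).sup' (G.dual.Wne p h') (G.dual.alpha n)
          = (G.B p).sup' (G.Bne p h') (G.dual.alpha n) := rfl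
      have hB : (G.dual.B p).inf' (G.dual.Bne p h') (G.dual.alpha n)
          = (G.W p).inf' (G.Wne p h') (G.dual.alpha n) := rfl
      rw [hW, hB]
      have h1 : (G.W p).sup' (G.Wne p h') (G.beta n)
          = 1 - (G.W p).inf' (G.Wne p h') (G.dual.alpha n) := by
        rw [sup'_congr_fun (G.Wne p h') (fun b _ => ih b)]
        exact sup'_one_sub _ _
      have h2 : (G.B p).inf' (G.Bne p h') (G.beta n)
          = 1 - (G.B p).sup' (G.Bne p h') (G.dual.alpha n) := by
        rw [inf'_congr_fun (G.Bne p h') (fun b _ => ih b)]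
        exact inf'_one_sub _ _
      rw [h1, h2]
      ring

lemma betaLim_eq_dual (p : P) : G.betaLim p = 1 - G.dual.alphaLim p := by
  have h1 : ∀ n, G.beta n p = 1 - G.dual.alpha n p := fun n => G.beta_dual n p
  show (⨅ n, G.beta n p) = 1 - G.dual.alphaLim p
  simp only [h1]
  have hbb : BddBelow (Set.range fun n => 1 - G.dual.alpha n p) :=
    ⟨0, by rintro _ ⟨n, rfl⟩; have := (G.dual.alpha_mem01 n p).2; simp only; linarith⟩
  have h2 : ∀ n, G.dual.alpha n p ≤ 1 - ⨅ n, (1 - G.dual.alpha n p) := by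
    intro n
    have := ciInf_le hbb n
    linarith
  have h3 : G.dual.alphaLim p ≤ 1 - ⨅ n, (1 - G.dual.alpha n p) := ciSup_le h2
  have h4 : ∀ n, 1 - G.dual.alphaLim p ≤ 1 - G.dual.alpha n p := by
    intro n
    have := G.dual.alpha_le_alphaLim n p
    linarith
  exact le_antisymm (by linarith) (le_ciInf h4)

end GameGraph


/-- the limit values `α(P)` and `β(P)` are rational. -/
theorem alphaLim_betaLim_rational (G : GameGraph P) (p : P) :
    (∃ q : ℚ, (q : ℝ) = G.alphaLim p) ∧ (∃ q : ℚ, (q : ℝ) = G.betaLim p) := by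
  constructor
  · exact G.exists_rat_alphaLim p
  · obtain ⟨q, hq⟩ := G.dual.exists_rat_alphaLim p
    refine ⟨1 - q, ?_⟩
    rw [G.betaLim_eq_dual p, ← hq]
    push_cast
    ring
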